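/- arXiv:1711.08013 — 2 statements merged into one kernel-verified Lean document; each statement's English description precedes it below -/
import Mathlib

section
/- Let P be an n×n positive semidefinite real matrix, A an m×n real matrix, and σ > 0, ρ > 0 real parameters. Then the (n+m)×(n+m) block matrix K = [[P + σI, Aᵀ], [A, −ρ⁻¹I]] is invertible. -/
open Matrix

theorem stmt_0 (n m : ℕ) (P : Matrix (Fin n) (Fin n) ℝ) (A : Matrix (Fin m) (Fin n) ℝ)
    (σ ρ : ℝ) (hP : P.PosSemidef) (hσ : 0 < σ) (hρ : 0 < ρ) :
    IsUnit (Matrix.fromBlocks (P + σ • (1 : Matrix (Fin n) (Fin n) ℝ)) Aᵀ A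
      (-(ρ⁻¹ • (1 : Matrix (Fin m) (Fin m) ℝ)))) := by
  rw [Matrix.isUnit_iff_isUnit_det, isUnit_iff_ne_zero]
  intro hdet
  obtain ⟨v, hv0, hKv⟩ := (Matrix.exists_mulVec_eq_zero_iff).mpr hdet
  set x : Fin n → ℝ := v ∘ Sum.inl with hx
  set y : Fin m → ℝ := v ∘ Sum.inr with hy
  have hv : v = Sum.elim x y := by funext i; cases i <;> rfl
  rw [hv, Matrix.fromBlocks_mulVec] at hKv
  have eq1 : (P + σ • (1 : Matrix (Fin n) (Fin n) ℝ)) *ᵥ x + Aᵀ *ᵥ y = 0 := by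
    funext i; exact congrFun hKv (Sum.inl i)
  have eq2 : A *ᵥ x + (-(ρ⁻¹ • (1 : Matrix (Fin m) (Fin m) ℝ))) *ᵥ y = 0 := by
    funext i; exact congrFun hKv (Sum.inr i)
  have hy2 : y = ρ • (A *ᵥ x) := by
    have : A *ᵥ x - ρ⁻¹ • y = 0 := by
      simpa [Matrix.neg_mulVec, Matrix.smul_mulVec, sub_eq_add_neg] using eq2
    have h' : ρ⁻¹ • y = A *ᵥ x := by linear_combination (norm := abel) -this
    funext i
    have := congrFun h' i
    simp only [Pi.smul_apply, smul_eq_mul] at this ⊢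
    field_simp at this
    linarith [this]
  -- dot with x
  have hdot : x ⬝ᵥ ((P + σ • 1) *ᵥ x) + x ⬝ᵥ (Aᵀ *ᵥ y) = 0 := by
    rw [← dotProduct_add, eq1, dotProduct_zero]
  have h1 : x ⬝ᵥ ((P + σ • 1) *ᵥ x) = x ⬝ᵥ (P *ᵥ x) + σ * (x ⬝ᵥ x) := by
    rw [Matrix.add_mulVec, dotProduct_add, Matrix.smul_mulVec, Matrix.one_mulVec,
      dotProduct_smul, smul_eq_mul]
  have h2 : x ⬝ᵥ (Aᵀ *ᵥ y) = ρ * ((A *ᵥ x) ⬝ᵥ (A *ᵥ x)) := by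
    rw [Matrix.dotProduct_mulVec, ← Matrix.mulVec_transpose, Matrix.transpose_transpose, hy2]
    simp [dotProduct_smul, dotProduct_comm]
  have hPx : 0 ≤ x ⬝ᵥ (P *ᵥ x) := by
    have := hP.dotProduct_mulVec_nonneg x
    simpa [dotProduct, Matrix.mulVec] using this
  have hxx : 0 ≤ x ⬝ᵥ x := Finset.sum_nonneg fun i _ => mul_self_nonneg _
  have hAx : 0 ≤ (A *ᵥ x) ⬝ᵥ (A *ᵥ x) := Finset.sum_nonneg fun i _ => mul_self_nonneg _
  have hxz : x ⬝ᵥ x = 0 := by nlinarith [hdot, h1, h2]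
  have hx0 : x = 0 := by
    have := (dotProduct_self_eq_zero (v := x)).mp hxz
    exact this
  have hy0 : y = 0 := by rw [hy2, hx0]; simp
  apply hv0
  rw [hv, hx0, hy0]; simp
end

section
/- For the Huber penalty φ(u) = u² if |u| ≤ M and M(2|u| − M) if |u| > M, one has for every u ∈ ℝ: φ(u) = min over (v, r, s) ∈ ℝ × ℝ≥0 × ℝ≥0 with u = v + r − s of v² + 2M(r + s). That is, the Huber function equals the optimal value of this constrained minimization. -/
theorem stmt_16 (M : ℝ) (hM : 0 < M) (u : ℝ) :
    IsLeast
      {w : ℝ | ∃ v r s : ℝ, 0 ≤ r ∧ 0 ≤ s ∧ u = v + r - s ∧ w = v ^ 2 + 2 * M * (r + s)}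
      (if |u| ≤ M then u ^ 2 else M * (2 * |u| - M)) := by
  constructor
  · by_cases h : |u| ≤ M
    · rw [if_pos h]
      exact ⟨u, 0, 0, le_refl 0, le_refl 0, by ring, by ring⟩
    · rw [if_neg h]
      push_neg at h
      rcases abs_cases u with ⟨h1, h2⟩ | ⟨h1, h2⟩
      · exact ⟨M, u - M, 0, by rw [h1] at h; linarith, le_refl 0, by ring,
          by rw [h1]; ring⟩
      · exact ⟨-M, 0, -M - u, le_refl 0, by rw [h1] at h; linarith, by ring,
          by rw [h1]; ring⟩
  · rintro w ⟨v, r, s, hr, hs, hu, hw⟩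
    have ht : u - v = r - s := by linarith
    have habs : |u - v| ≤ r + s := by
      rw [ht]; exact abs_le.mpr ⟨by linarith, by linarith⟩
    have hsq : |u - v| ^ 2 = (u - v) ^ 2 := sq_abs _
    have hanon : (0:ℝ) ≤ |u - v| := abs_nonneg _
    split_ifs with h
    · have h2 : u * (u - v) ≤ |u| * |u - v| := by
        calc u * (u - v) ≤ |u * (u - v)| := le_abs_self _
        _ = |u| * |u - v| := abs_mul _ _
      nlinarith [mul_nonneg (sub_nonneg.mpr h) hanon,
        mul_nonneg (sub_nonneg.mpr habs) hM.le]
    · have h3 : |u| ≤ |v| + |u - v| := by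
        calc |u| = |v + (u - v)| := by ring_nf
        _ ≤ |v| + |u - v| := abs_add_le _ _
      nlinarith [sq_nonneg (|v| - M), sq_abs v,
        mul_nonneg (sub_nonneg.mpr habs) hM.le]
end
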